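/- Let z_0 ∈ 𝕋, c ∈ ℂ with c ≠ 0, and suppose z(w) = z_0 + c(w - w_0) + O((w - w_0)^2) near w_0. Fix C_13 > 0 with C_13 < |c| and let G = { w : |Re( conj(z_0) c (w - w_0) )| > C_13 |w - w_0| }. Then there exist ε > 0 and C_14 > 0 such that for all w ∈ G with |w - w_0| < ε, |1 - |z(w)|| ≥ C_14 |z(w) - z_0|. -/

import Mathlib

open Filter Asymptotics Topology

lemma stolz_aux (C13 a M' cc A B V : ℝ) (ha : 0 ≤ a)
    (hA : C13 * a < |A|) (hB : |B| ≤ M' * a ^ 2) (hV0 : 0 ≤ V) (hV : V ≤ cc * a)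
    (hcc : 0 ≤ cc) (hK : (2 * M' + cc ^ 2) * a ≤ C13) :
    C13 * a ≤ |2 * (A + B) + V ^ 2| := by
  obtain ⟨hB1, hB2⟩ := abs_le.mp hB
  have hV2 : V ^ 2 ≤ cc ^ 2 * a ^ 2 := by nlinarith
  rcases abs_cases A with ⟨h1, h2⟩ | ⟨h1, h2⟩ <;>
    rcases abs_cases (2 * (A + B) + V ^ 2) with ⟨h3, h4⟩ | ⟨h3, h4⟩ <;>
    nlinarith [sq_nonneg V, sq_nonneg a]

/-- Stolz angle estimate: if z(w) = z₀ + c(w - w₀) + O((w-w₀)²) with |z₀| = 1, c ≠ 0,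
and 0 < C₁₃ < |c|, then for w in the non-tangential domain
G = { w : |Re(conj(z₀) c (w - w₀))| > C₁₃ |w - w₀| } close enough to w₀,
|1 - |z(w)|| ≥ C₁₄ |z(w) - z₀|. -/
theorem stolz_angle_estimate (z0 c w0 : ℂ) (hz0 : ‖z0‖ = 1) (hc : c ≠ 0)
    (z : ℂ → ℂ)
    (hz : (fun w : ℂ => z w - z0 - c * (w - w0)) =O[𝓝 w0] fun w : ℂ => ‖w - w0‖ ^ 2)
    (C13 : ℝ) (hC13 : 0 < C13) (hC13' : C13 < ‖c‖) :
    ∃ ε > 0, ∃ C14 > 0, ∀ w : ℂ,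
      |((starRingEnd ℂ) z0 * c * (w - w0)).re| > C13 * ‖w - w0‖ →
      ‖w - w0‖ < ε →
      C14 * ‖z w - z0‖ ≤ |1 - ‖z w‖| := by
  obtain ⟨M, hM⟩ := hz.bound
  rw [Metric.eventually_nhds_iff] at hM
  obtain ⟨δ, hδ, hMδ⟩ := hM
  set M' := max M 1 with hM'def
  have hM1 : (1:ℝ) ≤ M' := le_max_right _ _
  have hM0 : (0:ℝ) < M' := lt_of_lt_of_le one_pos hM1
  have hKpos : 0 < 2 * M' + (‖c‖ + 1) ^ 2 := by positivity
  have hc1 : (0:ℝ) < ‖c‖ + 1 := by positivity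
  refine ⟨min δ (min (1 / M') (min (C13 / (2 * M' + (‖c‖ + 1) ^ 2)) (1 / (‖c‖ + 1)))), ?_, C13 / (3 * (‖c‖ + 1)), ?_, ?_⟩
  · simp only [lt_min_iff]
    refine ⟨hδ, by positivity, by positivity, by positivity⟩
  · positivity
  intro w hw hwε
  simp only [lt_min_iff] at hwε
  obtain ⟨hw1, hw2, hw3, hw4⟩ := hwε
  set a := ‖w - w0‖ with hadef
  have ha0 : 0 ≤ a := norm_nonneg _
  have hapos : 0 < a := by
    rcases eq_or_lt_of_le ha0 with h | h
    · exfalso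
      have : w - w0 = 0 := by
        rwa [hadef, eq_comm, norm_eq_zero] at h
      rw [this, mul_zero] at hw
      simp at hw
      linarith [mul_nonneg hC13.le ha0, hw]
    · exact h
  -- bounds
  have haM : M' * a ≤ 1 := by
    rw [lt_div_iff₀ hM0] at hw2; linarith
  have haK : (2 * M' + (‖c‖ + 1) ^ 2) * a ≤ C13 := by
    rw [lt_div_iff₀ hKpos] at hw3; linarith
  have hac : (‖c‖ + 1) * a ≤ 1 := by nlinarith [hw4]
  set r := z w - z0 - c * (w - w0) with hrdef
  have hr : ‖r‖ ≤ M' * a ^ 2 := by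
    have := hMδ (show dist w w0 < δ by rwa [dist_eq_norm])
    simp only [norm_pow, norm_norm] at this
    calc ‖r‖ ≤ M * ‖w - w0‖ ^ 2 := this
      _ ≤ M' * a ^ 2 := by nlinarith [le_max_left M 1, sq_nonneg a]
  have hv : ‖z w - z0‖ ≤ (‖c‖ + 1) * a := by
    have : z w - z0 = c * (w - w0) + r := by rw [hrdef]; ring
    rw [this]
    calc ‖c * (w - w0) + r‖ ≤ ‖c * (w - w0)‖ + ‖r‖ := norm_add_le _ _
      _ = ‖c‖ * a + ‖r‖ := by rw [norm_mul]
      _ ≤ ‖c‖ * a + M' * a ^ 2 := by linarith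
      _ ≤ (‖c‖ + 1) * a := by nlinarith
  -- key expansion of normSq
  have key : ‖z w‖ ^ 2 - 1 = 2 * ((starRingEnd ℂ) z0 * (z w - z0)).re + ‖z w - z0‖ ^ 2 := by
    have h1 : ‖z w‖ ^ 2 = Complex.normSq (z w) := by
      rw [Complex.sq_norm]
    have h2 : ‖z w - z0‖ ^ 2 = Complex.normSq (z w - z0) := by
      rw [Complex.sq_norm]
    have hn : Complex.normSq z0 = 1 := by
      rw [← Complex.sq_norm, hz0]; norm_num
    have hre' : (z0 * (starRingEnd ℂ) (z w - z0)).re = ((starRingEnd ℂ) z0 * (z w - z0)).re := by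
      rw [← Complex.conj_re (z0 * (starRingEnd ℂ) (z w - z0)), map_mul, Complex.conj_conj]
    have hzw : z w = z0 + (z w - z0) := by ring
    rw [h1, h2, hzw, Complex.normSq_add, hn, hre']
    ring
  -- real part splitting
  have hre : ((starRingEnd ℂ) z0 * (z w - z0)).re =
      ((starRingEnd ℂ) z0 * c * (w - w0)).re + ((starRingEnd ℂ) z0 * r).re := by
    have : z w - z0 = c * (w - w0) + r := by rw [hrdef]; ring
    rw [this, mul_add, Complex.add_re, mul_assoc]
  have hre2 : |((starRingEnd ℂ) z0 * r).re| ≤ M' * a ^ 2 := by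
    calc |((starRingEnd ℂ) z0 * r).re| ≤ ‖(starRingEnd ℂ) z0 * r‖ := Complex.abs_re_le_norm _
      _ = ‖z0‖ * ‖r‖ := by rw [norm_mul, RCLike.norm_conj]
      _ = ‖r‖ := by rw [hz0, one_mul]
      _ ≤ M' * a ^ 2 := hr
  -- lower bound on |‖z w‖² - 1|
  have hlow : C13 * a ≤ |‖z w‖ ^ 2 - 1| := by
    rw [key, hre]
    exact stolz_aux C13 a M' (‖c‖ + 1) _ _ _ ha0 hw hre2 (norm_nonneg _) hv
      (by positivity) haK
  -- ‖z w‖ ≤ 2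
  have hz2 : ‖z w‖ ≤ 2 := by
    calc ‖z w‖ = ‖z0 + (z w - z0)‖ := by ring_nf
      _ ≤ ‖z0‖ + ‖z w - z0‖ := norm_add_le _ _
      _ ≤ 1 + (‖c‖ + 1) * a := by rw [hz0]; linarith
      _ ≤ 2 := by linarith
  have hz0' : 0 ≤ ‖z w‖ := norm_nonneg _
  -- |1 - ‖z w‖| * (1 + ‖z w‖) = |1 - ‖z w‖²|
  have hfact : |1 - ‖z w‖| * (1 + ‖z w‖) = |‖z w‖ ^ 2 - 1| := by
    rw [← abs_of_nonneg (show (0:ℝ) ≤ 1 + ‖z w‖ by linarith), ← abs_mul]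
    rw [abs_sub_comm]
    ring_nf
  have hmain : C13 * a ≤ |1 - ‖z w‖| * 3 := by
    calc C13 * a ≤ |‖z w‖ ^ 2 - 1| := hlow
      _ = |1 - ‖z w‖| * (1 + ‖z w‖) := hfact.symm
      _ ≤ |1 - ‖z w‖| * 3 := by
          apply mul_le_mul_of_nonneg_left (by linarith) (abs_nonneg _)
  calc C13 / (3 * (‖c‖ + 1)) * ‖z w - z0‖ ≤ C13 / (3 * (‖c‖ + 1)) * ((‖c‖ + 1) * a) := by
        apply mul_le_mul_of_nonneg_left hv (by positivity)
    _ = C13 * a / 3 := by field_simp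
    _ ≤ |1 - ‖z w‖| := by linarith
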